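/- Let λ₁,…,λₙ be complex numbers with |λᵢ| < 1 for all i. Then the n×n complex matrix M with entries M_{ij} = 1/(1 - λᵢ λ̄ⱼ) is Hermitian positive semidefinite, and its determinant equals ∏_{1≤i<j≤n} |λⱼ-λᵢ|²/|1-λᵢλ̄ⱼ|² · ∏_{i=1}^{n} 1/(1-|λᵢ|²). -/

import Mathlib

open Finset Matrix

private lemma cauchy_det : ∀ (n : ℕ) (a b : Fin n → ℂ), (∀ i j, 1 - a i * b j ≠ 0) →
    Matrix.det (Matrix.of fun i j => (1 - a i * b j)⁻¹) =
      (∏ i : Fin n, ∏ j ∈ Finset.Ioi i,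
        ((a j - a i) * (b j - b i) * ((1 - a i * b j)⁻¹ * (1 - a j * b i)⁻¹))) *
        ∏ i : Fin n, (1 - a i * b i)⁻¹ := by
  intro n
  induction n with
  | zero => intro a b h; simp
  | succ n ih =>
    intro a b h
    set H : Matrix (Fin (n+1)) (Fin (n+1)) ℂ := Matrix.of fun i j =>
      Fin.cases 1 (fun i' => (a i'.succ - a 0) * b j * (1 - a i'.succ * b j)⁻¹) i with hH
    set G : Matrix (Fin (n+1)) (Fin (n+1)) ℂ := Matrix.of fun i j =>
      Fin.cases
        (Fin.cases 1 (fun i' => (a i'.succ - a 0) * b 0 * (1 - a i'.succ * b 0)⁻¹) i)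
        (fun j' => Fin.cases 0 (fun i' => (a i'.succ - a 0) * (b j'.succ - b 0) *
          ((1 - a i'.succ * b j'.succ)⁻¹ * (1 - a i'.succ * b 0)⁻¹)) i) j with hG
    have step1 : Matrix.det (Matrix.of fun i j : Fin (n+1) => (1 - a i * b j)⁻¹) =
        Matrix.det (Matrix.of fun i j => (1 - a 0 * b j)⁻¹ * H i j) :=
      det_eq_of_forall_row_eq_smul_add_const (Matrix.vecCons 0 1) 0 (Matrix.cons_val_zero 0 1)
        (by
          intro i j
          refine Fin.cases ?_ (fun i' => ?_) i
          · simp [hH]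
          · simp only [hH, of_apply, Fin.cases_succ, Matrix.cons_val_succ, Pi.one_apply,
              Fin.cases_zero]
            have h1 := h i'.succ j; have h2 := h 0 j
            linear_combination (1 - a 0 * b j)⁻¹ * mul_inv_cancel₀ h1 - (1 - a i'.succ * b j)⁻¹ * mul_inv_cancel₀ h2)
    have step2 : Matrix.det (Matrix.of fun i j : Fin (n+1) => (1 - a 0 * b j)⁻¹ * H i j) =
        (∏ j : Fin (n+1), (1 - a 0 * b j)⁻¹) * Matrix.det H :=
      Matrix.det_mul_row _ _
    have step3 : Matrix.det H = Matrix.det G := by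
      rw [← Matrix.det_transpose H, ← Matrix.det_transpose G]
      refine det_eq_of_forall_row_eq_smul_add_const (Matrix.vecCons 0 1) 0 (Matrix.cons_val_zero 0 1) ?_
      intro j i
      refine Fin.cases ?_ (fun j' => ?_) j
      · -- column 0 : H i 0 = G i 0
        refine Fin.cases ?_ (fun i' => ?_) i <;>
          simp [hH, hG, Matrix.transpose_apply]
      · refine Fin.cases ?_ (fun i' => ?_) i
        · simp [hH, hG, Matrix.transpose_apply]
        · simp only [hH, hG, Matrix.transpose_apply, of_apply, Fin.cases_succ, Fin.cases_zero,
            Matrix.cons_val_succ, Matrix.cons_val_zero, Pi.one_apply]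
          have h1 := h i'.succ j'.succ; have h2 := h i'.succ 0
          field_simp
          ring
    have step4 : Matrix.det G = Matrix.det (G.submatrix Fin.succ Fin.succ) := by
      rw [Matrix.det_succ_row_zero]
      simp [Fin.sum_univ_succ, hG]
    have hsub : G.submatrix Fin.succ Fin.succ = Matrix.of fun i j : Fin n =>
        ((a i.succ - a 0) * (1 - a i.succ * b 0)⁻¹) *
          (Matrix.of (fun i j : Fin n => (b j.succ - b 0) *
            (Matrix.of (fun i j : Fin n => (1 - a i.succ * b j.succ)⁻¹) i j)) i j) := by
      ext i j
      simp [hG]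
      ring
    have step5 : Matrix.det (G.submatrix Fin.succ Fin.succ) =
        (∏ i : Fin n, (a i.succ - a 0) * (1 - a i.succ * b 0)⁻¹) *
          ((∏ j : Fin n, (b j.succ - b 0)) *
            Matrix.det (Matrix.of fun i j : Fin n => (1 - a i.succ * b j.succ)⁻¹)) := by
      rw [hsub, Matrix.det_mul_column, Matrix.det_mul_row]
    have step6 : Matrix.det (Matrix.of fun i j : Fin n => (1 - a i.succ * b j.succ)⁻¹) =
        (∏ i : Fin n, ∏ j ∈ Finset.Ioi i,
          ((a j.succ - a i.succ) * (b j.succ - b i.succ) *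
            ((1 - a i.succ * b j.succ)⁻¹ * (1 - a j.succ * b i.succ)⁻¹))) *
          ∏ i : Fin n, (1 - a i.succ * b i.succ)⁻¹ := by
      exact ih (fun i => a i.succ) (fun j => b j.succ) (fun i j => h i.succ j.succ)
    rw [step1, step2, step3, step4, step5, step6]
    -- now pure product algebra
    rw [Fin.prod_univ_succ (f := fun j => (1 - a 0 * b j)⁻¹)]
    rw [Fin.prod_univ_succ (f := fun i => (1 - a i * b i)⁻¹)]
    rw [Fin.prod_univ_succ (f := fun i => ∏ j ∈ Finset.Ioi i,
      ((a j - a i) * (b j - b i) * ((1 - a i * b j)⁻¹ * (1 - a j * b i)⁻¹)))]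
    rw [Fin.prod_Ioi_zero]
    have hsuc : ∀ i : Fin n, (∏ j ∈ Finset.Ioi i.succ,
        ((a j - a i.succ) * (b j - b i.succ) * ((1 - a i.succ * b j)⁻¹ * (1 - a j * b i.succ)⁻¹)))
        = ∏ j ∈ Finset.Ioi i, ((a j.succ - a i.succ) * (b j.succ - b i.succ) *
            ((1 - a i.succ * b j.succ)⁻¹ * (1 - a j.succ * b i.succ)⁻¹)) := fun i =>
      Fin.prod_Ioi_succ _ i
    simp only [hsuc]
    set D := ∏ i : Fin n, ∏ j ∈ Finset.Ioi i,
      ((a j.succ - a i.succ) * (b j.succ - b i.succ) *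
        ((1 - a i.succ * b j.succ)⁻¹ * (1 - a j.succ * b i.succ)⁻¹)) with hD
    set x := (1 - a 0 * b 0)⁻¹ with hx
    -- LHS: (x * ∏ (1-a0 b succ)⁻¹) * (∏ p2 * (∏ p3 * (D * ∏ p4)))
    -- RHS: (∏ q1 * D) * (x * ∏ p4)
    have merge : ∀ f g : Fin n → ℂ, (∏ i : Fin n, f i) * (∏ i : Fin n, g i)
        = ∏ i : Fin n, (f i * g i) := fun f g => (Finset.prod_mul_distrib).symm
    calc (x * ∏ j : Fin n, (1 - a 0 * b j.succ)⁻¹) *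
          ((∏ i : Fin n, (a i.succ - a 0) * (1 - a i.succ * b 0)⁻¹) *
            ((∏ j : Fin n, (b j.succ - b 0)) * (D * ∏ i : Fin n, (1 - a i.succ * b i.succ)⁻¹)))
        = (x * D) * ((((∏ j : Fin n, (1 - a 0 * b j.succ)⁻¹) *
            (∏ i : Fin n, (a i.succ - a 0) * (1 - a i.succ * b 0)⁻¹)) *
            (∏ j : Fin n, (b j.succ - b 0))) * (∏ i : Fin n, (1 - a i.succ * b i.succ)⁻¹)) := by
          ring
      _ = (x * D) * ∏ i : Fin n,
            ((((1 - a 0 * b i.succ)⁻¹ * ((a i.succ - a 0) * (1 - a i.succ * b 0)⁻¹)) *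
              (b i.succ - b 0)) * (1 - a i.succ * b i.succ)⁻¹) := by
          rw [merge, merge, merge]
      _ = (x * D) * ∏ i : Fin n,
            (((a i.succ - a 0) * (b i.succ - b 0) *
              ((1 - a 0 * b i.succ)⁻¹ * (1 - a i.succ * b 0)⁻¹)) * (1 - a i.succ * b i.succ)⁻¹) := by
          congr 1
          exact Finset.prod_congr rfl fun i _ => by ring
      _ = ((∏ j : Fin n, ((a j.succ - a 0) * (b j.succ - b 0) *
            ((1 - a 0 * b j.succ)⁻¹ * (1 - a j.succ * b 0)⁻¹))) * D) *
            (x * ∏ i : Fin n, (1 - a i.succ * b i.succ)⁻¹) := by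
          rw [← merge]; ring


open scoped ComplexOrder

section main
variable (n : ℕ) (l : Fin n → ℂ)

private lemma hnorm (hl : ∀ i, ‖l i‖ < 1) (i j : Fin n) : ‖l i * (starRingEnd ℂ) (l j)‖ < 1 := by
  rw [norm_mul]
  calc ‖l i‖ * ‖(starRingEnd ℂ) (l j)‖ < 1 * 1 := by
        apply mul_lt_mul'' ?_ ?_ (norm_nonneg _) (norm_nonneg _)
        · simpa using hl i
        · simpa [RCLike.norm_conj] using hl j
    _ = 1 := one_mul 1

private lemma hne (hl : ∀ i, ‖l i‖ < 1) (i j : Fin n) : 1 - l i * (starRingEnd ℂ) (l j) ≠ 0 := by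
  intro hzero
  have : l i * (starRingEnd ℂ) (l j) = 1 := by linear_combination -hzero
  have h2 := hnorm n l hl i j
  rw [this] at h2
  simp at h2

private lemma herm_part :
    (Matrix.of fun i j : Fin n => 1 / (1 - l i * (starRingEnd ℂ) (l j))).IsHermitian := by
  ext i j
  simp only [Matrix.conjTranspose_apply, Matrix.of_apply, one_div, star_inv₀, star_sub, star_one,
    star_mul', RCLike.star_def, Complex.conj_conj]
  rw [mul_comm]

private lemma quad_part (hl : ∀ i, ‖l i‖ < 1) (x : Fin n → ℂ) :
    0 ≤ dotProduct (star x)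
      ((Matrix.of fun i j : Fin n => 1 / (1 - l i * (starRingEnd ℂ) (l j))).mulVec x) := by
  have key : ∀ i j, (1 - l i * (starRingEnd ℂ) (l j))⁻¹
      = ∑' k : ℕ, (l i * (starRingEnd ℂ) (l j)) ^ k := fun i j =>
    (tsum_geometric_of_norm_lt_one (hnorm n l hl i j)).symm
  have hsum : ∀ i j : Fin n, Summable (fun k : ℕ =>
      (starRingEnd ℂ) (x i) * x j * (l i * (starRingEnd ℂ) (l j)) ^ k) := fun i j =>
    ((summable_geometric_of_norm_lt_one (hnorm n l hl i j)).mul_left _)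
  have calc1 : dotProduct (star x)
      ((Matrix.of fun i j : Fin n => 1 / (1 - l i * (starRingEnd ℂ) (l j))).mulVec x)
      = ∑' k : ℕ, (starRingEnd ℂ) (∑ j, x j * ((starRingEnd ℂ) (l j)) ^ k) *
          (∑ j, x j * ((starRingEnd ℂ) (l j)) ^ k) := by
    calc dotProduct (star x)
          ((Matrix.of fun i j : Fin n => 1 / (1 - l i * (starRingEnd ℂ) (l j))).mulVec x)
        = ∑ i, ∑ j, (starRingEnd ℂ) (x i) * x j * (1 - l i * (starRingEnd ℂ) (l j))⁻¹ := by
          simp only [dotProduct, Matrix.mulVec, Matrix.of_apply, one_div, Pi.star_apply,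
            RCLike.star_def, Finset.mul_sum]
          exact Finset.sum_congr rfl fun i _ => Finset.sum_congr rfl fun j _ => by ring
      _ = ∑ i, ∑ j, ∑' k : ℕ, (starRingEnd ℂ) (x i) * x j *
            (l i * (starRingEnd ℂ) (l j)) ^ k := by
          refine Finset.sum_congr rfl fun i _ => Finset.sum_congr rfl fun j _ => ?_
          rw [key i j, tsum_mul_left]
      _ = ∑ i, ∑' k : ℕ, ∑ j, (starRingEnd ℂ) (x i) * x j *
            (l i * (starRingEnd ℂ) (l j)) ^ k :=
          Finset.sum_congr rfl fun i _ => (Summable.tsum_finsetSum fun j _ => hsum i j).symm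
      _ = ∑' k : ℕ, ∑ i, ∑ j, (starRingEnd ℂ) (x i) * x j *
            (l i * (starRingEnd ℂ) (l j)) ^ k :=
          (Summable.tsum_finsetSum fun i _ => summable_sum (fun j _ => hsum i j)).symm
      _ = ∑' k : ℕ, (starRingEnd ℂ) (∑ j, x j * ((starRingEnd ℂ) (l j)) ^ k) *
            (∑ j, x j * ((starRingEnd ℂ) (l j)) ^ k) := by
          refine tsum_congr fun k => ?_
          rw [map_sum, Finset.sum_mul_sum]
          refine Finset.sum_congr rfl fun i _ => Finset.sum_congr rfl fun j _ => ?_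
          simp only [_root_.map_mul, map_pow, Complex.conj_conj, mul_pow]
          ring
  rw [calc1]
  exact tsum_nonneg fun k => star_mul_self_nonneg _

end main

open scoped ComplexOrder
theorem stmt_14 (n : ℕ) (l : Fin n → ℂ) (hl : ∀ i, ‖l i‖ < 1) :
    (Matrix.of fun i j : Fin n => 1 / (1 - l i * (starRingEnd ℂ) (l j))).PosSemidef ∧
      Matrix.det (Matrix.of fun i j : Fin n => 1 / (1 - l i * (starRingEnd ℂ) (l j))) =
        (((∏ i : Fin n, ∏ j ∈ Finset.Ioi i,
            ‖l j - l i‖ ^ 2 / ‖1 - l i * (starRingEnd ℂ) (l j)‖ ^ 2) *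
          ∏ i : Fin n, 1 / (1 - ‖l i‖ ^ 2) : ℝ) : ℂ) := by
  refine ⟨Matrix.PosSemidef.of_dotProduct_mulVec_nonneg (herm_part n l) (quad_part n l hl), ?_⟩
  have e1 : ∀ z : ℂ, ((‖z‖ : ℂ)) ^ 2 = z * (starRingEnd ℂ) z := fun z => by
    rw [← Complex.ofReal_pow, Complex.sq_norm, Complex.mul_conj]
  rw [show (Matrix.of fun i j : Fin n => 1 / (1 - l i * (starRingEnd ℂ) (l j)))
      = (Matrix.of fun i j : Fin n => (1 - l i * (starRingEnd ℂ) (l j))⁻¹) by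
    simp [one_div]]
  rw [cauchy_det n l (fun j => (starRingEnd ℂ) (l j)) (hne n l hl)]
  push_cast
  congr 1
  · refine Finset.prod_congr rfl fun i _ => Finset.prod_congr rfl fun j _ => ?_
    rw [e1, e1]
    simp only [map_sub, _root_.map_mul, _root_.map_one, Complex.conj_conj]
    rw [div_eq_mul_inv, mul_inv]
    ring
  · refine Finset.prod_congr rfl fun i _ => ?_
    rw [e1, one_div]
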